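/- arXiv:1307.1383 — 2 statements merged into one kernel-verified Lean document; each statement's English description precedes it below -/
import Mathlib

section
/- Let T > 0 and D₁ := {(s₁,t₁,s₂,t₂) : 0 < s₁ < t₁ < s₂ < t₂ < T}. Then the integral over D₁ of ((t₁−s₁)(t₂−s₂)(T − (t₁−s₁) − (t₂−s₂)))^{-1/2} with respect to Lebesgue measure is finite. -/
open MeasureTheory

open Set ENNReal in
/-- `∫⁻ x in (0,M), x^(-1/2) = 2√M`. -/
private lemma lint_rpow_half (M : ℝ) :
    ∫⁻ x in Set.Ioo (0:ℝ) M, ENNReal.ofReal (x ^ (-(1/2) : ℝ)) =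
      ENNReal.ofReal (2 * Real.sqrt M) := by
  rcases le_or_gt M 0 with hM | hM
  · rw [Set.Ioo_eq_empty (by simpa using hM)]
    simp [Real.sqrt_eq_zero'.mpr hM]
  · have hint : IntegrableOn (fun x : ℝ => x ^ (-(1/2) : ℝ)) (Set.Ioo 0 M) :=
      (intervalIntegral.integrableOn_Ioo_rpow_iff hM).mpr (by norm_num)
    rw [← ofReal_integral_eq_lintegral_ofReal hint
        ((ae_restrict_mem measurableSet_Ioo).mono fun x hx => Real.rpow_nonneg hx.1.le _)]
    congr 1
    rw [← MeasureTheory.integral_Ioc_eq_integral_Ioo, ← intervalIntegral.integral_of_le hM.le,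
      integral_rpow (Or.inl (by norm_num))]
    rw [Real.sqrt_eq_rpow, Real.zero_rpow (by norm_num)]
    norm_num
    ring

open Set ENNReal in
/-- reflected version. -/
private lemma lint_rpow_half' (M : ℝ) :
    ∫⁻ x in Set.Ioo (0:ℝ) M, ENNReal.ofReal ((M - x) ^ (-(1/2) : ℝ)) =
      ENNReal.ofReal (2 * Real.sqrt M) := by
  have hpre : (fun x : ℝ => M - x) ⁻¹' Set.Ioo (0:ℝ) M = Set.Ioo (0:ℝ) M := by
    ext x
    simp only [Set.mem_preimage, Set.mem_Ioo]
    constructor <;> rintro ⟨h1, h2⟩ <;> constructor <;> linarith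
  have h := (Measure.measurePreserving_sub_left (volume : Measure ℝ) M).setLIntegral_comp_preimage_emb
      (MeasurableEquiv.subLeft M).measurableEmbedding
      (fun y : ℝ => ENNReal.ofReal (y ^ (-(1/2) : ℝ))) (Set.Ioo 0 M)
  rw [hpre] at h
  rw [← lint_rpow_half M, ← h]

open Set ENNReal in
private lemma pointwise_half (M x : ℝ) (hx : 0 < x) (hxM : x < M) :
    (x * (M - x)) ^ (-(1/2) : ℝ) ≤
      (M/2) ^ (-(1/2) : ℝ) * (x ^ (-(1/2) : ℝ) + (M - x) ^ (-(1/2) : ℝ)) := by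
  have hM : 0 < M := hx.trans hxM
  have hMx : 0 < M - x := by linarith
  rw [Real.mul_rpow hx.le hMx.le]
  have h1 : (0:ℝ) ≤ x ^ (-(1/2) : ℝ) := Real.rpow_nonneg hx.le _
  have h2 : (0:ℝ) ≤ (M - x) ^ (-(1/2) : ℝ) := Real.rpow_nonneg hMx.le _
  have h3 : (0:ℝ) ≤ (M/2) ^ (-(1/2) : ℝ) := Real.rpow_nonneg (by linarith) _
  rcases le_total x (M/2) with hc | hc
  · have h4 : (M - x) ^ (-(1/2) : ℝ) ≤ (M/2) ^ (-(1/2) : ℝ) :=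
      Real.rpow_le_rpow_of_nonpos (by linarith) (by linarith) (by norm_num)
    nlinarith [mul_le_mul_of_nonneg_left h4 h1]
  · have h4 : x ^ (-(1/2) : ℝ) ≤ (M/2) ^ (-(1/2) : ℝ) :=
      Real.rpow_le_rpow_of_nonpos (by linarith) (by linarith) (by norm_num)
    nlinarith [mul_le_mul_of_nonneg_left h4 h2]

open Set ENNReal in
/-- The key uniform bound: `∫⁻ x in (0,M), (x(M-x))^(-1/2) ≤ 4√2`, uniformly in `M`. -/
private lemma lint_beta_half (M : ℝ) :
    ∫⁻ x in Set.Ioo (0:ℝ) M, ENNReal.ofReal ((x * (M - x)) ^ (-(1/2) : ℝ)) ≤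
      ENNReal.ofReal (4 * Real.sqrt 2) := by
  rcases le_or_gt M 0 with hM | hM
  · rw [Set.Ioo_eq_empty (by simpa using hM)]
    simp
  · have hadd : Measurable (fun x : ℝ =>
        ENNReal.ofReal (x ^ (-(1/2) : ℝ)) + ENNReal.ofReal ((M - x) ^ (-(1/2) : ℝ))) := by
      fun_prop
    have hmeas : Measurable (fun x : ℝ =>
        ENNReal.ofReal ((M/2) ^ (-(1/2) : ℝ)) *
          (ENNReal.ofReal (x ^ (-(1/2) : ℝ)) + ENNReal.ofReal ((M - x) ^ (-(1/2) : ℝ)))) :=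
      hadd.const_mul _
    calc ∫⁻ x in Set.Ioo (0:ℝ) M, ENNReal.ofReal ((x * (M - x)) ^ (-(1/2) : ℝ))
        ≤ ∫⁻ x in Set.Ioo (0:ℝ) M,
            ENNReal.ofReal ((M/2) ^ (-(1/2) : ℝ)) *
              (ENNReal.ofReal (x ^ (-(1/2) : ℝ)) + ENNReal.ofReal ((M - x) ^ (-(1/2) : ℝ))) := by
          refine setLIntegral_mono hmeas fun x hx => ?_
          rw [← ENNReal.ofReal_add (Real.rpow_nonneg hx.1.le _)
              (Real.rpow_nonneg (by have := hx.2; linarith) _),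
            ← ENNReal.ofReal_mul (Real.rpow_nonneg (by linarith [hx.1, hx.2]) _)]
          exact ENNReal.ofReal_le_ofReal (pointwise_half M x hx.1 hx.2)
      _ = ENNReal.ofReal ((M/2) ^ (-(1/2) : ℝ)) *
            (ENNReal.ofReal (2 * Real.sqrt M) + ENNReal.ofReal (2 * Real.sqrt M)) := by
          rw [lintegral_const_mul _ hadd]
          rw [lintegral_add_left (by fun_prop : Measurable (fun x : ℝ =>
              ENNReal.ofReal (x ^ (-(1/2) : ℝ)))),
            lint_rpow_half, lint_rpow_half']
      _ ≤ ENNReal.ofReal (4 * Real.sqrt 2) := by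
          rw [← ENNReal.ofReal_add (by positivity) (by positivity),
            ← ENNReal.ofReal_mul (Real.rpow_nonneg (by linarith) _)]
          apply ENNReal.ofReal_le_ofReal
          apply le_of_eq
          have hs2 : (0:ℝ) < Real.sqrt 2 := Real.sqrt_pos.mpr (by norm_num)
          have hsM : (0:ℝ) < Real.sqrt M := Real.sqrt_pos.mpr hM
          have h1 : (M/2 : ℝ) ^ (-(1/2) : ℝ) = Real.sqrt 2 / Real.sqrt M := by
            rw [Real.rpow_neg (by linarith), ← Real.sqrt_eq_rpow,
              Real.sqrt_div hM.le 2]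
            rw [inv_div]
          rw [h1]
          field_simp
          ring
      
open Set ENNReal in
private lemma lint_translate (s : ℝ) (g : ℝ → ℝ≥0∞) (M : ℝ) :
    ∫⁻ t in Set.Ioo s (s + M), g (t - s) = ∫⁻ x in Set.Ioo (0:ℝ) M, g x := by
  have hpre : (fun x : ℝ => x + s) ⁻¹' Set.Ioo s (s + M) = Set.Ioo (0:ℝ) M := by
    ext x
    simp only [Set.mem_preimage, Set.mem_Ioo]
    constructor <;> rintro ⟨h1, h2⟩ <;> exact ⟨by linarith, by linarith⟩
  have h := (measurePreserving_add_right (volume : Measure ℝ) s).setLIntegral_comp_preimage_emb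
      (measurableEmbedding_addRight s) (fun t => g (t - s)) (Set.Ioo s (s + M))
  rw [hpre] at h
  rw [← h]
  simp only [add_sub_cancel_right]

/-- For `D₁ = {0 < s₁ < t₁ < s₂ < t₂ < T}`, the integral over `D₁` of
`((t₁-s₁)(t₂-s₂)(T-(t₁-s₁)-(t₂-s₂)))^(-1/2)` is finite. -/
theorem stmt_8 (T : ℝ) (hT : 0 < T) :
    ∫⁻ p in {q : ℝ × ℝ × ℝ × ℝ |
        0 < q.1 ∧ q.1 < q.2.1 ∧ q.2.1 < q.2.2.1 ∧ q.2.2.1 < q.2.2.2 ∧ q.2.2.2 < T},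
      ENNReal.ofReal
        (((p.2.1 - p.1) * (p.2.2.2 - p.2.2.1) *
            (T - (p.2.1 - p.1) - (p.2.2.2 - p.2.2.1))) ^ (-(1 / 2 : ℝ))) < ⊤ := by
  set F : ℝ × ℝ × ℝ × ℝ → ENNReal := fun p =>
    ENNReal.ofReal
      (((p.2.1 - p.1) * (p.2.2.2 - p.2.2.1) *
          (T - (p.2.1 - p.1) - (p.2.2.2 - p.2.2.1))) ^ (-(1 / 2 : ℝ))) with hF_def
  set D : Set (ℝ × ℝ × ℝ × ℝ) := {q : ℝ × ℝ × ℝ × ℝ |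
      0 < q.1 ∧ q.1 < q.2.1 ∧ q.2.1 < q.2.2.1 ∧ q.2.2.1 < q.2.2.2 ∧ q.2.2.2 < T} with hD_def
  have hD : MeasurableSet D := by
    rw [hD_def]
    simp only [Set.setOf_and]
    refine MeasurableSet.inter ?_ (MeasurableSet.inter ?_ (MeasurableSet.inter ?_
      (MeasurableSet.inter ?_ ?_))) <;> exact measurableSet_lt (by fun_prop) (by fun_prop)
  have hF : Measurable F := by rw [hF_def]; fun_prop
  have hG : Measurable (D.indicator F) := hF.indicator hD
  -- notation for the bounding functions
  set C₂ : ENNReal := ENNReal.ofReal (4 * Real.sqrt 2) with hC₂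
  set I : ℝ → ENNReal := (Set.Ioo (0:ℝ) T).indicator (1 : ℝ → ENNReal) with hI
  have hImeas : Measurable I := measurable_const.indicator measurableSet_Ioo
  set J : ℝ → ℝ → ENNReal := fun s t =>
    (Set.Ioo s (s + T)).indicator (fun u => ENNReal.ofReal ((u - s) ^ (-(1/2) : ℝ))) t with hJ
  have hJmeas : ∀ s, Measurable (J s) :=
    fun s => Measurable.indicator (by fun_prop) measurableSet_Ioo
  -- the key pointwise bound
  have key : ∀ s₁ t₁ s₂ t₂ : ℝ, D.indicator F (s₁, t₁, s₂, t₂) ≤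
      (I s₁ * J s₁ t₁ * I s₂) *
        (Set.Ioo s₂ (s₂ + (T - (t₁ - s₁)))).indicator
          (fun u => ENNReal.ofReal
            (((u - s₂) * ((T - (t₁ - s₁)) - (u - s₂))) ^ (-(1/2) : ℝ))) t₂ := by
    intro s₁ t₁ s₂ t₂
    by_cases hp : (s₁, t₁, s₂, t₂) ∈ D
    · rw [Set.indicator_of_mem hp]
      obtain ⟨h1, h2, h3, h4, h5⟩ := hp
      simp only at h1 h2 h3 h4 h5
      have ha : 0 < t₁ - s₁ := by linarith
      have hb : 0 < t₂ - s₂ := by linarith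
      have hc : 0 < (T - (t₁ - s₁)) - (t₂ - s₂) := by linarith
      simp only [hI, hJ,
        Set.indicator_of_mem (show s₁ ∈ Set.Ioo (0:ℝ) T from ⟨h1, by linarith⟩),
        Set.indicator_of_mem (show t₁ ∈ Set.Ioo s₁ (s₁ + T) from ⟨h2, by linarith⟩),
        Set.indicator_of_mem (show s₂ ∈ Set.Ioo (0:ℝ) T from ⟨by linarith, by linarith⟩),
        Set.indicator_of_mem (show t₂ ∈ Set.Ioo s₂ (s₂ + (T - (t₁ - s₁))) from
          ⟨h4, by linarith⟩), Pi.one_apply, one_mul, mul_one]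
      apply le_of_eq
      rw [hF_def]
      simp only
      have hre : (t₁ - s₁) * (t₂ - s₂) * (T - (t₁ - s₁) - (t₂ - s₂)) =
          (t₁ - s₁) * ((t₂ - s₂) * ((T - (t₁ - s₁)) - (t₂ - s₂))) := by ring
      rw [hre, Real.mul_rpow ha.le (mul_nonneg hb.le hc.le),
        ENNReal.ofReal_mul (Real.rpow_nonneg ha.le _)]
    · rw [Set.indicator_of_notMem hp]
      exact zero_le
  rw [← lintegral_indicator hD]
  calc ∫⁻ p, D.indicator F p
      = ∫⁻ s₁, ∫⁻ t₁, ∫⁻ s₂, ∫⁻ t₂, D.indicator F (s₁, t₁, s₂, t₂) := by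
        rw [Measure.volume_eq_prod, lintegral_prod _ hG.aemeasurable]
        refine lintegral_congr fun s₁ => ?_
        rw [Measure.volume_eq_prod, lintegral_prod (fun y => D.indicator F (s₁, y))
          ((hG.comp measurable_prodMk_left).aemeasurable)]
        refine lintegral_congr fun t₁ => ?_
        rw [Measure.volume_eq_prod, lintegral_prod (fun y => D.indicator F (s₁, t₁, y))
          (((hG.comp measurable_prodMk_left).comp measurable_prodMk_left).aemeasurable)]
    _ ≤ ∫⁻ s₁, ∫⁻ t₁, ∫⁻ s₂, (I s₁ * J s₁ t₁ * I s₂) * C₂ := by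
        refine lintegral_mono fun s₁ => lintegral_mono fun t₁ => lintegral_mono fun s₂ => ?_
        calc ∫⁻ t₂, D.indicator F (s₁, t₁, s₂, t₂)
            ≤ ∫⁻ t₂, (I s₁ * J s₁ t₁ * I s₂) *
                (Set.Ioo s₂ (s₂ + (T - (t₁ - s₁)))).indicator
                  (fun u => ENNReal.ofReal
                    (((u - s₂) * ((T - (t₁ - s₁)) - (u - s₂))) ^ (-(1/2) : ℝ))) t₂ :=
              lintegral_mono fun t₂ => key s₁ t₁ s₂ t₂
          _ = (I s₁ * J s₁ t₁ * I s₂) * ∫⁻ t₂,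
                (Set.Ioo s₂ (s₂ + (T - (t₁ - s₁)))).indicator
                  (fun u => ENNReal.ofReal
                    (((u - s₂) * ((T - (t₁ - s₁)) - (u - s₂))) ^ (-(1/2) : ℝ))) t₂ :=
              lintegral_const_mul _ (Measurable.indicator (by fun_prop) measurableSet_Ioo)
          _ ≤ (I s₁ * J s₁ t₁ * I s₂) * C₂ := by
              refine mul_le_mul_right ?_ _
              rw [lintegral_indicator measurableSet_Ioo,
                lint_translate s₂ (fun x => ENNReal.ofReal
                  ((x * ((T - (t₁ - s₁)) - x)) ^ (-(1/2) : ℝ))) (T - (t₁ - s₁))]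
              exact lint_beta_half (T - (t₁ - s₁))
    _ = ∫⁻ s₁, ∫⁻ t₁, (I s₁ * J s₁ t₁ * C₂) * ENNReal.ofReal T := by
        refine lintegral_congr fun s₁ => lintegral_congr fun t₁ => ?_
        rw [lintegral_congr (fun s₂ => show (I s₁ * J s₁ t₁ * I s₂) * C₂ =
            (I s₁ * J s₁ t₁ * C₂) * I s₂ by ring),
          lintegral_const_mul _ hImeas, hI, lintegral_indicator_one measurableSet_Ioo,
          Real.volume_Ioo, sub_zero]
    _ = ∫⁻ s₁, I s₁ * (C₂ * ENNReal.ofReal T * ENNReal.ofReal (2 * Real.sqrt T)) := by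
        refine lintegral_congr fun s₁ => ?_
        rw [lintegral_congr (fun t₁ => show (I s₁ * J s₁ t₁ * C₂) * ENNReal.ofReal T =
            (I s₁ * C₂ * ENNReal.ofReal T) * J s₁ t₁ by ring),
          lintegral_const_mul _ (hJmeas s₁), hJ]
        simp only
        rw [lintegral_indicator measurableSet_Ioo,
          lint_translate s₁ (fun x => ENNReal.ofReal (x ^ (-(1/2) : ℝ))) T,
          lint_rpow_half T]
        ring
    _ = ENNReal.ofReal T * (C₂ * ENNReal.ofReal T * ENNReal.ofReal (2 * Real.sqrt T)) := by
        rw [lintegral_mul_const _ hImeas, hI, lintegral_indicator_one measurableSet_Ioo,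
          Real.volume_Ioo, sub_zero, mul_comm]
    _ < ⊤ := by
        refine ENNReal.mul_lt_top ENNReal.ofReal_lt_top ?_
        exact ENNReal.mul_lt_top (ENNReal.mul_lt_top ENNReal.ofReal_lt_top
          ENNReal.ofReal_lt_top) ENNReal.ofReal_lt_top
end

section
/- Let T>0 and D₂ := {(s₁,t₁,s₂,t₂) : 0 < s₁ < s₂ < t₁ < t₂ < T}. For (s₁,t₁,s₂,t₂) ∈ D₂ set Q := (t₁−s₁)(t₂−s₂)(T − (t₁−s₁) − (t₂−s₂) + 2(t₁−s₂)) − T(t₁−s₂)². Then Q > 0 on D₂ and ∫_{D₂} Q^{-1/2} ds₁ dt₁ ds₂ dt₂ ≤ 2π²√T · ∫₀^T∫₀^{t₂}∫₀^{t₁}(t₂−s₂)^{-1/2} ds₂ dt₁ dt₂ / (2π√T), i.e. ∫_{D₂} Q^{-1/2} < ∞. -/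
open MeasureTheory

lemma aux_K {T : ℝ} (hT : 0 < T) :
    ∫⁻ x in Set.Ioo (0:ℝ) T, ENNReal.ofReal (x ^ (-(1/2 : ℝ))) ≤ ENNReal.ofReal (2 * Real.sqrt T) := by
  have hint : IntervalIntegrable (fun x : ℝ => x ^ (-(1/2 : ℝ))) volume 0 T :=
    intervalIntegral.intervalIntegrable_rpow' (by norm_num)
  have hOn : IntegrableOn (fun x : ℝ => x ^ (-(1/2 : ℝ))) (Set.Ioo 0 T) :=
    ((intervalIntegrable_iff_integrableOn_Ioc_of_le hT.le).mp hint).mono_set Set.Ioo_subset_Ioc_self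
  have hnn : 0 ≤ᵐ[volume.restrict (Set.Ioo (0:ℝ) T)] fun x : ℝ => x ^ (-(1/2:ℝ)) := by
    filter_upwards [ae_restrict_mem measurableSet_Ioo] with x hx
    exact Real.rpow_nonneg hx.1.le _
  rw [← ofReal_integral_eq_lintegral_ofReal hOn hnn]
  apply ENNReal.ofReal_le_ofReal
  have : ∫ x in Set.Ioo (0:ℝ) T, x ^ (-(1/2:ℝ)) = 2 * Real.sqrt T := by
    rw [← integral_Ioc_eq_integral_Ioo, ← intervalIntegral.integral_of_le hT.le,
      integral_rpow (Or.inl (by norm_num))]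
    rw [Real.sqrt_eq_rpow]
    norm_num [Real.zero_rpow]
    ring
  exact this.le

lemma aux_J {T : ℝ} (hT : 0 < T) (a : ℝ) :
    ∫⁻ x, (Set.Ioo a (a+T)).indicator (fun y => ENNReal.ofReal ((y - a) ^ (-(1/2:ℝ)))) x
      ≤ ENNReal.ofReal (2 * Real.sqrt T) := by
  rw [lintegral_indicator measurableSet_Ioo]
  have hmp := measurePreserving_add_right (volume : Measure ℝ) a
  have hemb := measurableEmbedding_addRight a
  have key := hmp.setLIntegral_comp_emb hemb
      (fun y => ENNReal.ofReal ((y - a) ^ (-(1/2:ℝ)))) (Set.Ioo 0 T)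
  have himg : (fun x : ℝ => x + a) '' Set.Ioo 0 T = Set.Ioo a (a+T) := by
    rw [Set.image_add_const_Ioo]; rw [zero_add, add_comm]
  rw [himg] at key
  rw [← key]
  calc ∫⁻ x in Set.Ioo (0:ℝ) T, ENNReal.ofReal ((x + a - a) ^ (-(1/2:ℝ)))
      = ∫⁻ x in Set.Ioo (0:ℝ) T, ENNReal.ofReal (x ^ (-(1/2:ℝ))) := by
        apply lintegral_congr; intro x; rw [add_sub_cancel_right]
    _ ≤ ENNReal.ofReal (2 * Real.sqrt T) := aux_K hT

lemma aux_QB {T s₁ t₁ s₂ t₂ : ℝ} (h0 : 0 < s₁) (h1 : s₁ < s₂) (h2 : s₂ < t₁) (h3 : t₁ < t₂)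
    (h4 : t₂ < T) :
    s₁ * (s₂ - s₁) * (t₂ - t₁) ≤
      (t₁ - s₁) * (t₂ - s₂) * (T - (t₁ - s₁) - (t₂ - s₂) + 2 * (t₁ - s₂)) - T * (t₁ - s₂)^2 := by
  have hm : 0 < t₁ - s₂ := by linarith
  have ham : 0 < s₂ - s₁ := by linarith
  have hbm : 0 < t₂ - t₁ := by linarith
  have hab : 0 ≤ (t₁ - s₁) * (t₂ - s₂) - (t₁ - s₂)^2 := by
    nlinarith [mul_pos ham hbm, mul_pos hm ham, mul_pos hm hbm]
  nlinarith [mul_nonneg (by linarith : (0:ℝ) ≤ T - t₂) hab,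
    mul_nonneg h0.le (mul_nonneg hm.le (by linarith : (0:ℝ) ≤ (s₂ - s₁) + (t₂ - t₁))),
    mul_pos hm (mul_pos ham hbm)]

/-- On `D₂ = {0 < s₁ < s₂ < t₁ < t₂ < T}`, the quantity
`Q = (t₁-s₁)(t₂-s₂)(T-(t₁-s₁)-(t₂-s₂)+2(t₁-s₂)) - T(t₁-s₂)²` is positive, and
`∫_{D₂} Q^(-1/2) < ∞`. -/
theorem stmt_18 (T : ℝ) (hT : 0 < T)
    (D₂ : Set (ℝ × ℝ × ℝ × ℝ))
    (hD₂ : D₂ = {q : ℝ × ℝ × ℝ × ℝ |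
      0 < q.1 ∧ q.1 < q.2.2.1 ∧ q.2.2.1 < q.2.1 ∧ q.2.1 < q.2.2.2 ∧ q.2.2.2 < T})
    (Q : ℝ × ℝ × ℝ × ℝ → ℝ)
    (hQ : ∀ q : ℝ × ℝ × ℝ × ℝ, Q q =
      (q.2.1 - q.1) * (q.2.2.2 - q.2.2.1) *
          (T - (q.2.1 - q.1) - (q.2.2.2 - q.2.2.1) + 2 * (q.2.1 - q.2.2.1)) -
        T * (q.2.1 - q.2.2.1) ^ 2) :
    (∀ q ∈ D₂, 0 < Q q) ∧
    ∫⁻ q in D₂, ENNReal.ofReal ((Q q) ^ (-(1 / 2 : ℝ))) < ⊤ := by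
  set e : ℝ := -(1/2 : ℝ) with he
  -- B is the lower bound for Q
  set B : ℝ × ℝ × ℝ × ℝ → ℝ := fun q => q.1 * (q.2.2.1 - q.1) * (q.2.2.2 - q.2.1) with hB
  have hmem : ∀ q ∈ D₂, 0 < q.1 ∧ q.1 < q.2.2.1 ∧ q.2.2.1 < q.2.1 ∧ q.2.1 < q.2.2.2 ∧
      q.2.2.2 < T := by
    intro q hq; rw [hD₂] at hq; exact hq
  have hBpos : ∀ q ∈ D₂, 0 < B q := by
    intro q hq
    obtain ⟨h0, h1, h2, h3, h4⟩ := hmem q hq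
    have : 0 < q.2.2.1 - q.1 := by linarith
    have : 0 < q.2.2.2 - q.2.1 := by linarith
    positivity
  have hQB : ∀ q ∈ D₂, B q ≤ Q q := by
    intro q hq
    obtain ⟨h0, h1, h2, h3, h4⟩ := hmem q hq
    rw [hQ]
    exact aux_QB h0 h1 h2 h3 h4
  refine ⟨fun q hq => lt_of_lt_of_le (hBpos q hq) (hQB q hq), ?_⟩
  have hDmeas : MeasurableSet D₂ := by
    rw [hD₂]
    apply MeasurableSet.inter
    · exact measurableSet_lt measurable_const measurable_fst
    apply MeasurableSet.inter
    · exact measurableSet_lt measurable_fst (measurable_snd.comp measurable_snd).fst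
    apply MeasurableSet.inter
    · exact measurableSet_lt (measurable_snd.comp measurable_snd).fst measurable_snd.fst
    apply MeasurableSet.inter
    · exact measurableSet_lt measurable_snd.fst (measurable_snd.comp measurable_snd).snd
    · exact measurableSet_lt (measurable_snd.comp measurable_snd).snd measurable_const
  -- the three single-variable pieces
  set p₁ : ℝ → ENNReal := fun x => (Set.Ioo (0:ℝ) T).indicator (fun y => ENNReal.ofReal (y ^ e)) x
    with hp₁def
  set pI : ℝ → ENNReal := fun x => (Set.Ioo (0:ℝ) T).indicator 1 x with hpIdef
  set p₃ : ℝ → ℝ → ENNReal := fun a x =>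
    (Set.Ioo a (a+T)).indicator (fun y => ENNReal.ofReal ((y - a) ^ e)) x with hp₃def
  set C : ENNReal := ENNReal.ofReal (2 * Real.sqrt T) with hC
  have hp₃le : ∀ a, ∫⁻ x, p₃ a x ≤ C := fun a => aux_J hT a
  have hp₁le : ∫⁻ x, p₁ x ≤ C := by
    simp only [hp₁def, he, hC]
    rw [lintegral_indicator measurableSet_Ioo]
    exact aux_K hT
  have hpIint : ∫⁻ x, pI x = ENNReal.ofReal T := by
    rw [hpIdef]
    rw [lintegral_indicator_one measurableSet_Ioo, Real.volume_Ioo, sub_zero]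
  -- ne-top facts
  have hne : ∀ (s : Set ℝ) (f : ℝ → ℝ) (x : ℝ),
      (s.indicator (fun y => ENNReal.ofReal (f y)) x) ≠ ⊤ := by
    intro s f x
    by_cases h : x ∈ s <;> simp [Set.indicator_apply, h]
  have hp₁ne : ∀ x, p₁ x ≠ ⊤ := fun x => hne _ _ x
  have hpIne : ∀ x, pI x ≠ ⊤ := by
    intro x; rw [hpIdef]
    by_cases h : x ∈ Set.Ioo (0:ℝ) T <;> simp [Set.indicator_apply, h]
  have hp₃ne : ∀ a x, p₃ a x ≠ ⊤ := fun a x => hne _ _ x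
  have hCne : C ≠ ⊤ := ENNReal.ofReal_ne_top
  -- the product bound F
  set F : ℝ × ℝ × ℝ × ℝ → ENNReal :=
    fun q => p₁ q.1 * pI q.2.1 * p₃ q.1 q.2.2.1 * p₃ q.2.1 q.2.2.2 with hF
  -- step A : integrand bounded by indicator of B-power, bounded by F
  have stepA : ∫⁻ q in D₂, ENNReal.ofReal ((Q q) ^ e) ≤ ∫⁻ q, F q := by
    have h1 : ∫⁻ q in D₂, ENNReal.ofReal ((Q q) ^ e)
        ≤ ∫⁻ q in D₂, D₂.indicator (fun q => ENNReal.ofReal ((B q) ^ e)) q := by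
      apply setLIntegral_mono_ae
      · exact (Measurable.indicator
          ((((measurable_fst.mul ((measurable_snd.comp measurable_snd).fst.sub
              measurable_fst)).mul ((measurable_snd.comp measurable_snd).snd.sub
              measurable_snd.fst)).pow_const e).ennreal_ofReal) hDmeas).aemeasurable
      · filter_upwards with q hq
        rw [Set.indicator_of_mem hq]
        apply ENNReal.ofReal_le_ofReal
        exact Real.rpow_le_rpow_of_nonpos (hBpos q hq) (hQB q hq) (by norm_num [he])
    refine h1.trans ?_
    rw [← lintegral_indicator hDmeas]
    simp only [Set.indicator_indicator, Set.inter_self]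
    apply lintegral_mono
    intro q
    by_cases hq : q ∈ D₂
    · rw [Set.indicator_of_mem hq]
      obtain ⟨h0, h1, h2, h3, h4⟩ := hmem q hq
      have e1 : p₁ q.1 = ENNReal.ofReal (q.1 ^ e) := by
        rw [hp₁def]; exact Set.indicator_of_mem (Set.mem_Ioo.mpr ⟨h0, by linarith⟩) _
      have e2 : pI q.2.1 = 1 := by
        rw [hpIdef]; exact Set.indicator_of_mem (Set.mem_Ioo.mpr ⟨by linarith, by linarith⟩) _
      have e3 : p₃ q.1 q.2.2.1 = ENNReal.ofReal ((q.2.2.1 - q.1) ^ e) := by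
        rw [hp₃def]; exact Set.indicator_of_mem (Set.mem_Ioo.mpr ⟨h1, by linarith⟩) _
      have e4 : p₃ q.2.1 q.2.2.2 = ENNReal.ofReal ((q.2.2.2 - q.2.1) ^ e) := by
        rw [hp₃def]; exact Set.indicator_of_mem (Set.mem_Ioo.mpr ⟨h3, by linarith⟩) _
      rw [hF]
      simp only [e1, e2, e3, e4, mul_one]
      rw [← ENNReal.ofReal_mul (Real.rpow_nonneg h0.le _),
        ← ENNReal.ofReal_mul (mul_nonneg (Real.rpow_nonneg h0.le _)
          (Real.rpow_nonneg (by linarith) _))]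
      apply le_of_eq
      congr 1
      rw [hB]
      rw [Real.mul_rpow (mul_nonneg h0.le (by linarith)) (by linarith),
        Real.mul_rpow h0.le (by linarith)]
    · rw [Set.indicator_of_notMem hq]
      exact zero_le
  -- measurability of F
  have hp₃unc : Measurable (fun z : ℝ × ℝ => p₃ z.1 z.2) := by
    have : (fun z : ℝ × ℝ => p₃ z.1 z.2) =
        Set.indicator {z : ℝ × ℝ | z.1 < z.2 ∧ z.2 < z.1 + T}
          (fun z => ENNReal.ofReal ((z.2 - z.1) ^ e)) := by
      funext z
      rw [hp₃def]
      simp only [Set.indicator_apply, Set.mem_Ioo, Set.mem_setOf_eq]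
    rw [this]
    exact Measurable.indicator
      (((measurable_snd.sub measurable_fst).pow_const e).ennreal_ofReal)
      ((measurableSet_lt measurable_fst measurable_snd).inter
        (measurableSet_lt measurable_snd (measurable_fst.add_const T)))
  have hp₁meas : Measurable p₁ := by
    rw [hp₁def]
    exact Measurable.indicator ((measurable_id.pow_const e).ennreal_ofReal) measurableSet_Ioo
  have hpImeas : Measurable pI := by
    rw [hpIdef]
    exact Measurable.indicator measurable_const measurableSet_Ioo
  have hFmeas : Measurable F := by
    rw [hF]
    exact (((hp₁meas.comp measurable_fst).mul
        (hpImeas.comp measurable_snd.fst)).mul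
        (hp₃unc.comp (measurable_fst.prodMk (measurable_snd.comp measurable_snd).fst))).mul
        (hp₃unc.comp (measurable_snd.fst.prodMk (measurable_snd.comp measurable_snd).snd))
  -- Tonelli
  have tonelli : ∫⁻ q, F q = ∫⁻ s₁, ∫⁻ t₁, ∫⁻ s₂, ∫⁻ t₂,
      p₁ s₁ * pI t₁ * p₃ s₁ s₂ * p₃ t₁ t₂ := by
    have m0 : AEMeasurable F ((volume : Measure ℝ).prod (volume : Measure (ℝ × ℝ × ℝ))) := by
      rw [← Measure.volume_eq_prod]; exact hFmeas.aemeasurable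
    rw [Measure.volume_eq_prod ℝ (ℝ × ℝ × ℝ), lintegral_prod _ m0]
    apply lintegral_congr; intro s₁
    have m1 : Measurable (fun y : ℝ × ℝ × ℝ => F (s₁, y)) := hFmeas.comp measurable_prodMk_left
    have m1' : AEMeasurable (fun y : ℝ × ℝ × ℝ => F (s₁, y))
        ((volume : Measure ℝ).prod (volume : Measure (ℝ × ℝ))) := by
      rw [← Measure.volume_eq_prod]; exact m1.aemeasurable
    rw [Measure.volume_eq_prod ℝ (ℝ × ℝ), lintegral_prod _ m1']
    apply lintegral_congr; intro t₁
    have m2 : Measurable (fun w : ℝ × ℝ => F (s₁, t₁, w)) := m1.comp measurable_prodMk_left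
    have m2' : AEMeasurable (fun w : ℝ × ℝ => F (s₁, t₁, w))
        ((volume : Measure ℝ).prod (volume : Measure ℝ)) := by
      rw [← Measure.volume_eq_prod]; exact m2.aemeasurable
    rw [Measure.volume_eq_prod ℝ ℝ, lintegral_prod _ m2']
  -- iterated bounds
  have h4 : ∀ s₁ t₁ s₂ : ℝ, ∫⁻ t₂, p₁ s₁ * pI t₁ * p₃ s₁ s₂ * p₃ t₁ t₂
      ≤ p₁ s₁ * pI t₁ * p₃ s₁ s₂ * C := by
    intro s₁ t₁ s₂
    rw [show (fun t₂ => p₁ s₁ * pI t₁ * p₃ s₁ s₂ * p₃ t₁ t₂)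
        = (fun t₂ => (p₁ s₁ * pI t₁ * p₃ s₁ s₂) * p₃ t₁ t₂) from rfl]
    rw [lintegral_const_mul' _ _
      (ENNReal.mul_ne_top (ENNReal.mul_ne_top (hp₁ne s₁) (hpIne t₁)) (hp₃ne s₁ s₂))]
    exact mul_le_mul_right (hp₃le t₁) _
  have h3 : ∀ s₁ t₁ : ℝ, ∫⁻ s₂, ∫⁻ t₂, p₁ s₁ * pI t₁ * p₃ s₁ s₂ * p₃ t₁ t₂
      ≤ p₁ s₁ * pI t₁ * C * C := by
    intro s₁ t₁
    calc ∫⁻ s₂, ∫⁻ t₂, p₁ s₁ * pI t₁ * p₃ s₁ s₂ * p₃ t₁ t₂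
        ≤ ∫⁻ s₂, p₁ s₁ * pI t₁ * p₃ s₁ s₂ * C := lintegral_mono fun s₂ => h4 s₁ t₁ s₂
      _ = ∫⁻ s₂, (p₁ s₁ * pI t₁ * C) * p₃ s₁ s₂ := by
          apply lintegral_congr; intro s₂; ring
      _ = (p₁ s₁ * pI t₁ * C) * ∫⁻ s₂, p₃ s₁ s₂ := lintegral_const_mul' _ _
          (ENNReal.mul_ne_top (ENNReal.mul_ne_top (hp₁ne s₁) (hpIne t₁)) hCne)
      _ ≤ (p₁ s₁ * pI t₁ * C) * C := mul_le_mul_right (hp₃le s₁) _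
      _ = p₁ s₁ * pI t₁ * C * C := rfl
  have h2 : ∀ s₁ : ℝ, ∫⁻ t₁, ∫⁻ s₂, ∫⁻ t₂, p₁ s₁ * pI t₁ * p₃ s₁ s₂ * p₃ t₁ t₂
      ≤ p₁ s₁ * C * C * ENNReal.ofReal T := by
    intro s₁
    calc ∫⁻ t₁, ∫⁻ s₂, ∫⁻ t₂, p₁ s₁ * pI t₁ * p₃ s₁ s₂ * p₃ t₁ t₂
        ≤ ∫⁻ t₁, p₁ s₁ * pI t₁ * C * C := lintegral_mono fun t₁ => h3 s₁ t₁
      _ = ∫⁻ t₁, (p₁ s₁ * C * C) * pI t₁ := by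
          apply lintegral_congr; intro t₁; ring
      _ = (p₁ s₁ * C * C) * ∫⁻ t₁, pI t₁ := lintegral_const_mul' _ _
          (ENNReal.mul_ne_top (ENNReal.mul_ne_top (hp₁ne s₁) hCne) hCne)
      _ = p₁ s₁ * C * C * ENNReal.ofReal T := by rw [hpIint]
  have h1 : ∫⁻ s₁, ∫⁻ t₁, ∫⁻ s₂, ∫⁻ t₂, p₁ s₁ * pI t₁ * p₃ s₁ s₂ * p₃ t₁ t₂
      ≤ C * C * C * ENNReal.ofReal T := by
    calc ∫⁻ s₁, ∫⁻ t₁, ∫⁻ s₂, ∫⁻ t₂, p₁ s₁ * pI t₁ * p₃ s₁ s₂ * p₃ t₁ t₂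
        ≤ ∫⁻ s₁, p₁ s₁ * C * C * ENNReal.ofReal T := lintegral_mono fun s₁ => h2 s₁
      _ = ∫⁻ s₁, (C * C * ENNReal.ofReal T) * p₁ s₁ := by
          apply lintegral_congr; intro s₁; ring
      _ = (C * C * ENNReal.ofReal T) * ∫⁻ s₁, p₁ s₁ := lintegral_const_mul' _ _
          (ENNReal.mul_ne_top (ENNReal.mul_ne_top hCne hCne) ENNReal.ofReal_ne_top)
      _ ≤ (C * C * ENNReal.ofReal T) * C := mul_le_mul_right hp₁le _
      _ = C * C * C * ENNReal.ofReal T := by ring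
  calc ∫⁻ q in D₂, ENNReal.ofReal ((Q q) ^ (-(1/2 : ℝ)))
      = ∫⁻ q in D₂, ENNReal.ofReal ((Q q) ^ e) := by rw [he]
    _ ≤ ∫⁻ q, F q := stepA
    _ ≤ C * C * C * ENNReal.ofReal T := by rw [tonelli]; exact h1
    _ < ⊤ := by
        refine ENNReal.mul_lt_top (ENNReal.mul_lt_top (ENNReal.mul_lt_top ?_ ?_) ?_) ?_ <;>
          simp [hC, ENNReal.mul_lt_top]
end
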